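/- Let p be an odd prime, K ≥ 1 an integer, and T ⊆ Q_p a K-thick set, meaning that for every integer l, T intersects p^{-(K+l)} Z_p \ p^{-l} Z_p nontrivially. Let f ∈ Z_p[t] (or with coefficients in an unramified quadratic extension of Q_p) be a polynomial of degree d ≥ 1. Then for all sufficiently large m, p^{-Kd} · max_{t ∈ B_m} |f(t)|_p ≤ max_{t ∈ T ∩ B_m} |f(t)|_p, where B_m = p^{-m} Z_p. -/

import Mathlib

/-- A set `T ⊆ ℚ_p` is `K`-thick if for every `l ∈ ℤ` it meets
`p^{-(K+l)} ℤ_p − p^{-l} ℤ_p = {t : p^l < ‖t‖ ≤ p^{K+l}}`. -/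
def IsKThick (p : ℕ) [Fact (Nat.Prime p)] (K : ℕ) (T : Set ℚ_[p]) : Prop :=
  ∀ l : ℤ, ∃ t ∈ T, (p : ℝ) ^ l < ‖t‖ ∧ ‖t‖ ≤ (p : ℝ) ^ ((K : ℤ) + l)

/-- For a `K`-thick set `T ⊆ ℚ_p` and a polynomial `f` of degree `d ≥ 1` with
`ℤ_p`-coefficients, for all sufficiently large `m`:
`p^{-Kd} · max_{t ∈ B_m} ‖f(t)‖ ≤ max_{t ∈ T ∩ B_m} ‖f(t)‖`. -/
theorem stmt2 (p : ℕ) [Fact (Nat.Prime p)] (hp : Odd p)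
    (K : ℕ) (hK : 1 ≤ K) (T : Set ℚ_[p]) (hT : IsKThick p K T)
    (f : Polynomial ℤ_[p]) (hd : 1 ≤ f.natDegree) :
    ∃ M : ℕ, ∀ m : ℕ, M ≤ m →
      (p : ℝ) ^ (-((K : ℤ) * (f.natDegree : ℤ))) *
          sSup ((fun t : ℚ_[p] => ‖(f.map (PadicInt.Coe.ringHom (p := p))).eval t‖) ''
            {t : ℚ_[p] | ‖t‖ ≤ (p : ℝ) ^ m}) ≤
        sSup ((fun t : ℚ_[p] => ‖(f.map (PadicInt.Coe.ringHom (p := p))).eval t‖) ''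
          (T ∩ {t : ℚ_[p] | ‖t‖ ≤ (p : ℝ) ^ m})) := by
  classical
  set g : Polynomial ℚ_[p] := f.map (PadicInt.Coe.ringHom (p := p)) with hgdef
  have hP1 : (1 : ℝ) < p := by exact_mod_cast (Fact.out : p.Prime).one_lt
  have hP0 : (0 : ℝ) < p := lt_trans zero_lt_one hP1
  have hf0 : f ≠ 0 := by
    intro h
    rw [h] at hd
    simp at hd
  set d : ℕ := f.natDegree with hddef
  set a : ℤ_[p] := f.leadingCoeff with hadef
  have ha : a ≠ 0 := Polynomial.leadingCoeff_ne_zero.2 hf0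
  set v : ℤ := (a.valuation : ℤ) with hvdef
  have hv0 : 0 ≤ v := Int.natCast_nonneg _
  have hnorma : ‖((a : ℤ_[p]) : ℚ_[p])‖ = (p : ℝ) ^ (-v) := by
    rw [PadicInt.padic_norm_e_of_padicInt]
    exact PadicInt.norm_eq_zpow_neg_valuation ha
  have hinj : Function.Injective (PadicInt.Coe.ringHom (p := p)) := by
    intro x y h
    exact Subtype.ext h
  have hgdeg : g.natDegree = d := Polynomial.natDegree_map_eq_of_injective hinj f
  have hcoeff : ∀ i, g.coeff i = ((f.coeff i : ℤ_[p]) : ℚ_[p]) := by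
    intro i
    rw [hgdef, Polynomial.coeff_map]
    rfl
  have hcoeff_le : ∀ i, ‖g.coeff i‖ ≤ 1 := by
    intro i
    rw [hcoeff, PadicInt.padic_norm_e_of_padicInt]
    exact PadicInt.norm_le_one _
  have hcoeffd : ‖g.coeff d‖ = (p : ℝ) ^ (-v) := by
    rw [hcoeff]
    exact hnorma
  -- upper bound on the ball of radius p^j
  have key_up : ∀ j : ℤ, v ≤ j → ∀ t : ℚ_[p], ‖t‖ ≤ (p : ℝ) ^ j →
      ‖g.eval t‖ ≤ (p : ℝ) ^ (j * d - v) := by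
    intro j hvj t ht
    have hj0 : (0 : ℤ) ≤ j := le_trans hv0 hvj
    rw [Polynomial.eval_eq_sum_range]
    apply IsUltrametricDist.norm_sum_le_of_forall_le_of_nonneg (by positivity)
    intro i hi
    rw [Finset.mem_range, hgdeg, Nat.lt_succ_iff] at hi
    rw [norm_mul, norm_pow]
    have htpow : ‖t‖ ^ i ≤ (p : ℝ) ^ (j * i) := by
      calc ‖t‖ ^ i ≤ ((p : ℝ) ^ j) ^ i := pow_le_pow_left₀ (norm_nonneg t) ht i
        _ = (p : ℝ) ^ (j * i) := by rw [← zpow_natCast ((p : ℝ) ^ j), ← zpow_mul]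
    rcases eq_or_lt_of_le hi with h | h
    · rw [h] at htpow ⊢
      calc ‖g.coeff d‖ * ‖t‖ ^ d ≤ (p : ℝ) ^ (-v) * (p : ℝ) ^ (j * d) := by
            apply mul_le_mul (le_of_eq hcoeffd) htpow (by positivity) (by positivity)
        _ = (p : ℝ) ^ (j * d - v) := by rw [← zpow_add₀ (ne_of_gt hP0)]; ring_nf
    · have hexp : j * i ≤ j * d - v := by nlinarith [hv0, hvj, hj0]
      calc ‖g.coeff i‖ * ‖t‖ ^ i ≤ 1 * (p : ℝ) ^ (j * i) := by
            apply mul_le_mul (hcoeff_le i) htpow (by positivity) (by norm_num)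
        _ = (p : ℝ) ^ (j * i) := one_mul _
        _ ≤ (p : ℝ) ^ (j * d - v) := zpow_le_zpow_right₀ (le_of_lt hP1) hexp
  -- value at a point of norm p^j, j > v
  have key_low : ∀ t : ℚ_[p], ∀ j : ℤ, ‖t‖ = (p : ℝ) ^ j → v < j →
      ‖g.eval t‖ = (p : ℝ) ^ (j * d - v) := by
    intro t j ht hvj
    have hj0 : (0 : ℤ) ≤ j := le_trans hv0 (le_of_lt hvj)
    rw [Polynomial.eval_eq_sum_range, hgdeg, Finset.sum_range_succ]
    have htop : ‖g.coeff d * t ^ d‖ = (p : ℝ) ^ (j * d - v) := by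
      rw [norm_mul, norm_pow, ht, hcoeffd, ← zpow_natCast ((p : ℝ) ^ j), ← zpow_mul,
        ← zpow_add₀ (ne_of_gt hP0)]
      ring_nf
    have hrest : ‖∑ i ∈ Finset.range d, g.coeff i * t ^ i‖ < (p : ℝ) ^ (j * d - v) := by
      have hb : ‖∑ i ∈ Finset.range d, g.coeff i * t ^ i‖ ≤ (p : ℝ) ^ (j * d - j) := by
        apply IsUltrametricDist.norm_sum_le_of_forall_le_of_nonneg (by positivity)
        intro i hi
        rw [Finset.mem_range] at hi
        have hi' : (i : ℤ) ≤ (d : ℤ) - 1 := by omega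
        rw [norm_mul, norm_pow, ht]
        calc ‖g.coeff i‖ * ((p : ℝ) ^ j) ^ i ≤ 1 * ((p : ℝ) ^ j) ^ i := by
              apply mul_le_mul_of_nonneg_right (hcoeff_le i) (by positivity)
          _ = (p : ℝ) ^ (j * i) := by
              rw [one_mul, ← zpow_natCast ((p : ℝ) ^ j), ← zpow_mul]
          _ ≤ (p : ℝ) ^ (j * d - j) := by
              apply zpow_le_zpow_right₀ (le_of_lt hP1)
              nlinarith [hj0, hi']
      refine lt_of_le_of_lt hb ?_
      apply zpow_lt_zpow_right₀ hP1
      omega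
    have hne : ‖∑ i ∈ Finset.range d, g.coeff i * t ^ i‖ ≠ ‖g.coeff d * t ^ d‖ := by
      rw [htop]; exact ne_of_lt hrest
    rw [Padic.add_eq_max_of_ne hne, htop, max_eq_right (le_of_lt (htop ▸ hrest))]
  -- main argument
  refine ⟨K + v.toNat, fun m hm => ?_⟩
  have hvm : v ≤ (m : ℤ) - K := by
    have : (K : ℤ) + v.toNat ≤ m := by exact_mod_cast hm
    omega
  obtain ⟨t₀, ht₀T, ht₀lo, ht₀hi⟩ := hT ((m : ℤ) - K)
  have ht₀ne : t₀ ≠ 0 := by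
    intro h
    rw [h, norm_zero] at ht₀lo
    exact absurd ht₀lo (not_lt_of_ge (le_of_lt (zpow_pos hP0 _)))
  set j : ℤ := -t₀.valuation with hjdef
  have hjt : ‖t₀‖ = (p : ℝ) ^ j := Padic.norm_eq_zpow_neg_valuation ht₀ne
  have hjlo : (m : ℤ) - K < j := by
    rw [hjt] at ht₀lo
    exact (zpow_lt_zpow_iff_right₀ hP1).1 ht₀lo
  have hjhi : j ≤ (m : ℤ) := by
    rw [hjt] at ht₀hi
    have := (zpow_le_zpow_iff_right₀ hP1).1 ht₀hi
    omega
  have hvj : v < j := lt_of_le_of_lt hvm hjlo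
  have hvm' : v ≤ (m : ℤ) := le_trans hvm (by omega)
  have ht₀B : ‖t₀‖ ≤ (p : ℝ) ^ m := by
    rw [hjt, ← zpow_natCast (p : ℝ) m]
    exact zpow_le_zpow_right₀ (le_of_lt hP1) hjhi
  have hval₀ : ‖g.eval t₀‖ = (p : ℝ) ^ (j * d - v) := key_low t₀ j hjt hvj
  -- bound the LHS sup
  have hsupL : sSup ((fun t : ℚ_[p] => ‖g.eval t‖) '' {t : ℚ_[p] | ‖t‖ ≤ (p : ℝ) ^ m}) ≤
      (p : ℝ) ^ ((m : ℤ) * d - v) := by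
    apply Real.sSup_le
    · rintro x ⟨t, ht, rfl⟩
      exact key_up (m : ℤ) hvm' t (by rw [← zpow_natCast (p : ℝ) m] at ht; exact ht)
    · positivity
  -- RHS sup is at least the value at t₀
  have hbdd : BddAbove ((fun t : ℚ_[p] => ‖g.eval t‖) ''
      (T ∩ {t : ℚ_[p] | ‖t‖ ≤ (p : ℝ) ^ m})) := by
    refine ⟨(p : ℝ) ^ ((m : ℤ) * d - v), ?_⟩
    rintro x ⟨t, ⟨_, ht⟩, rfl⟩
    exact key_up (m : ℤ) hvm' t (by rw [← zpow_natCast (p : ℝ) m] at ht; exact ht)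
  have hsupR : (p : ℝ) ^ (j * d - v) ≤
      sSup ((fun t : ℚ_[p] => ‖g.eval t‖) '' (T ∩ {t : ℚ_[p] | ‖t‖ ≤ (p : ℝ) ^ m})) := by
    rw [← hval₀]
    exact le_csSup hbdd ⟨t₀, ⟨ht₀T, ht₀B⟩, rfl⟩
  calc (p : ℝ) ^ (-((K : ℤ) * (d : ℤ))) *
        sSup ((fun t : ℚ_[p] => ‖g.eval t‖) '' {t : ℚ_[p] | ‖t‖ ≤ (p : ℝ) ^ m})
      ≤ (p : ℝ) ^ (-((K : ℤ) * (d : ℤ))) * (p : ℝ) ^ ((m : ℤ) * d - v) := by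
        apply mul_le_mul_of_nonneg_left hsupL (by positivity)
    _ = (p : ℝ) ^ (((m : ℤ) - K) * d - v) := by
        rw [← zpow_add₀ (ne_of_gt hP0)]; ring_nf
    _ ≤ (p : ℝ) ^ (j * d - v) := by
        apply zpow_le_zpow_right₀ (le_of_lt hP1)
        have hd' : (1 : ℤ) ≤ (d : ℤ) := by exact_mod_cast hd
        nlinarith [hjlo]
    _ ≤ _ := hsupR
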